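/- arXiv:2106.07707 — 3 statements merged into one kernel-verified Lean document; each statement's English description precedes it below -/
import Mathlib

section
/- Let ⟨A,∧,∨,→,∼,1⟩ be a Nelson algebra. Then for all x,y,z in A: x↣(y∧z) = (x↣y)∧(x↣z), where x↣y:=(x→y)∧(∼y→∼x). -/
/-- A Nelson algebra ⟨A,∧,∨,→,∼,1⟩ of type (2,2,2,1,0). -/
structure NelsonAlgebra (A : Type*) where
  meet : A → A → A
  join : A → A → A
  imp : A → A → A
  neg : A → A
  one : A
  n1 : ∀ x y, meet x (join x y) = x
  n2 : ∀ x y z, meet x (join y z) = join (meet z x) (meet y x)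
  n3 : ∀ x, neg (neg x) = x
  n4 : ∀ x y, neg (meet x y) = join (neg x) (neg y)
  n5 : ∀ x y, meet x (neg x) = meet (meet x (neg x)) (join y (neg y))
  n6 : ∀ x, imp x x = one
  n7 : ∀ x y, meet x (imp x y) = meet x (join (neg x) y)
  n8 : ∀ x y z, imp (meet x y) z = imp x (imp y z)

/-- The weak implication x↣y := (x→y)∧(∼y→∼x). -/
def NelsonAlgebra.wimp {A : Type*} (N : NelsonAlgebra A) (x y : A) : A :=
  N.meet (N.imp x y) (N.imp (N.neg y) (N.neg x))

namespace NelsonAlgebra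

variable {A : Type*}

section Equational

variable (N : NelsonAlgebra A)

theorem midem (x : A) : N.meet x x = x := by
  calc N.meet x x = N.meet x (N.neg (N.neg x)) := by rw [N.n3]
    _ = N.meet x (N.neg (N.meet (N.neg x) (N.join (N.neg x) x))) := by rw [N.n1]
    _ = N.meet x (N.join (N.neg (N.neg x)) (N.neg (N.join (N.neg x) x))) := by rw [N.n4]
    _ = N.meet x (N.join x (N.neg (N.join (N.neg x) x))) := by rw [N.n3]
    _ = x := N.n1 _ _

theorem njoin (x y : A) : N.neg (N.join x y) = N.meet (N.neg x) (N.neg y) := by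
  have h : N.join x y = N.neg (N.meet (N.neg x) (N.neg y)) := by
    rw [N.n4, N.n3, N.n3]
  rw [h, N.n3]

theorem jidem (x : A) : N.join x x = x := by
  calc N.join x x = N.neg (N.neg (N.join x x)) := (N.n3 _).symm
    _ = N.neg (N.meet (N.neg x) (N.neg x)) := by rw [njoin]
    _ = N.neg (N.neg x) := by rw [midem]
    _ = x := N.n3 x

theorem absorb2 (y x : A) : N.join (N.meet y x) x = x := by
  calc N.join (N.meet y x) x = N.join (N.meet y x) (N.meet x x) := by rw [midem]
    _ = N.meet x (N.join x y) := (N.n2 x x y).symm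
    _ = x := N.n1 x y

theorem mcomm (x y : A) : N.meet x y = N.meet y x := by
  calc N.meet x y = N.join (N.meet x y) (N.meet x y) := (jidem _ _).symm
    _ = N.meet y (N.join x x) := (N.n2 y x x).symm
    _ = N.meet y x := by rw [jidem]

theorem jcomm (x y : A) : N.join x y = N.join y x := by
  calc N.join x y = N.neg (N.neg (N.join x y)) := (N.n3 _).symm
    _ = N.neg (N.meet (N.neg x) (N.neg y)) := by rw [njoin]
    _ = N.neg (N.meet (N.neg y) (N.neg x)) := by rw [mcomm]
    _ = N.neg (N.neg (N.join y x)) := by rw [njoin]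
    _ = N.join y x := N.n3 _

theorem mjabs (x y : A) : N.meet x (N.join y x) = x := by
  rw [jcomm N y x]; exact N.n1 x y

theorem jmabs (x y : A) : N.join x (N.meet x y) = x := by
  rw [mcomm N x y, jcomm N x (N.meet y x)]; exact absorb2 N y x

theorem mdist (x y z : A) : N.meet x (N.join y z) = N.join (N.meet x y) (N.meet x z) := by
  calc N.meet x (N.join y z) = N.meet x (N.join z y) := by rw [jcomm N y z]
    _ = N.join (N.meet y x) (N.meet z x) := N.n2 x z y
    _ = N.join (N.meet x y) (N.meet x z) := by rw [mcomm N y x, mcomm N z x]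

theorem mtop (x : A) : N.meet x N.one = x := by
  calc N.meet x N.one = N.meet x (N.imp x x) := by rw [N.n6]
    _ = N.meet x (N.join (N.neg x) x) := N.n7 x x
    _ = N.join (N.meet x (N.neg x)) (N.meet x x) := mdist N x (N.neg x) x
    _ = N.join (N.meet x (N.neg x)) x := by rw [midem]
    _ = x := by rw [mcomm N x (N.neg x)]; exact absorb2 N (N.neg x) x

theorem jtop' (x : A) : N.join N.one x = N.one := by
  calc N.join N.one x = N.meet (N.join N.one x) N.one := (mtop N _).symm
    _ = N.meet N.one (N.join N.one x) := mcomm N _ _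
    _ = N.one := N.n1 N.one x

theorem jtop (x : A) : N.join x N.one = N.one := (jcomm N x N.one).trans (jtop' N x)

theorem aL (x y z : A) : N.meet x (N.join (N.join x y) z) = x := by
  calc N.meet x (N.join (N.join x y) z)
      = N.join (N.meet x (N.join x y)) (N.meet x z) := mdist N _ _ _
    _ = N.join x (N.meet x z) := by rw [N.n1]
    _ = x := jmabs N x z

theorem bL (x y z : A) : N.meet y (N.join (N.join x y) z) = y := by
  calc N.meet y (N.join (N.join x y) z)
      = N.join (N.meet y (N.join x y)) (N.meet y z) := mdist N _ _ _
    _ = N.join y (N.meet y z) := by rw [mjabs N y x]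
    _ = y := jmabs N y z

theorem cL (x y z : A) : N.meet z (N.join (N.join x y) z) = z := by
  calc N.meet z (N.join (N.join x y) z)
      = N.join (N.meet z (N.join x y)) (N.meet z z) := mdist N _ _ _
    _ = N.join (N.meet z (N.join x y)) z := by rw [midem]
    _ = z := by rw [mcomm N z (N.join x y)]; exact absorb2 N (N.join x y) z

theorem bR (x y z : A) : N.meet y (N.join x (N.join y z)) = y := by
  calc N.meet y (N.join x (N.join y z))
      = N.join (N.meet y x) (N.meet y (N.join y z)) := mdist N _ _ _
    _ = N.join (N.meet y x) y := by rw [N.n1]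
    _ = y := by rw [mcomm N y x]; exact absorb2 N x y

theorem cR (x y z : A) : N.meet z (N.join x (N.join y z)) = z := by
  calc N.meet z (N.join x (N.join y z))
      = N.join (N.meet z x) (N.meet z (N.join y z)) := mdist N _ _ _
    _ = N.join (N.meet z x) z := by rw [mjabs N z y]
    _ = z := by rw [mcomm N z x]; exact absorb2 N x z

theorem jassoc (x y z : A) : N.join (N.join x y) z = N.join x (N.join y z) := by
  have h1 : N.meet (N.join (N.join x y) z) (N.join x (N.join y z)) = N.join x (N.join y z) := by
    calc N.meet (N.join (N.join x y) z) (N.join x (N.join y z))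
        = N.join (N.meet (N.join (N.join x y) z) x)
            (N.meet (N.join (N.join x y) z) (N.join y z)) := mdist N _ _ _
      _ = N.join (N.meet (N.join (N.join x y) z) x)
            (N.join (N.meet (N.join (N.join x y) z) y)
              (N.meet (N.join (N.join x y) z) z)) := by
          rw [mdist N (N.join (N.join x y) z) y z]
      _ = N.join x (N.join y z) := by
          rw [mcomm N _ x, mcomm N _ y, mcomm N _ z, aL, bL, cL]
  have h2 : N.meet (N.join x (N.join y z)) (N.join (N.join x y) z) = N.join (N.join x y) z := by
    calc N.meet (N.join x (N.join y z)) (N.join (N.join x y) z)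
        = N.join (N.meet (N.join x (N.join y z)) (N.join x y))
            (N.meet (N.join x (N.join y z)) z) := mdist N _ _ _
      _ = N.join (N.join (N.meet (N.join x (N.join y z)) x)
            (N.meet (N.join x (N.join y z)) y))
            (N.meet (N.join x (N.join y z)) z) := by
          rw [mdist N (N.join x (N.join y z)) x y]
      _ = N.join (N.join x y) z := by
          rw [mcomm N _ x, mcomm N _ y, mcomm N _ z, N.n1, bR, cR]
  calc N.join (N.join x y) z = N.meet (N.join x (N.join y z)) (N.join (N.join x y) z) := h2.symm
    _ = N.meet (N.join (N.join x y) z) (N.join x (N.join y z)) := mcomm N _ _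
    _ = N.join x (N.join y z) := h1

theorem massoc (x y z : A) : N.meet (N.meet x y) z = N.meet x (N.meet y z) := by
  calc N.meet (N.meet x y) z = N.neg (N.neg (N.meet (N.meet x y) z)) := (N.n3 _).symm
    _ = N.neg (N.join (N.neg (N.meet x y)) (N.neg z)) := by rw [N.n4]
    _ = N.neg (N.join (N.join (N.neg x) (N.neg y)) (N.neg z)) := by rw [N.n4]
    _ = N.neg (N.join (N.neg x) (N.join (N.neg y) (N.neg z))) := by rw [jassoc]
    _ = N.neg (N.join (N.neg x) (N.neg (N.meet y z))) := by rw [N.n4]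
    _ = N.neg (N.neg (N.meet x (N.meet y z))) := by rw [N.n4 x (N.meet y z)]
    _ = N.meet x (N.meet y z) := N.n3 _

end Equational

/-- Type synonym carrying the lattice structure of a Nelson algebra. -/
def NL (N : NelsonAlgebra A) : Type _ := A

instance (N : NelsonAlgebra A) : Min (NL N) := ⟨N.meet⟩
instance (N : NelsonAlgebra A) : Max (NL N) := ⟨N.join⟩

instance (N : NelsonAlgebra A) : Lattice (NL N) :=
  Lattice.mk' (jcomm N) (jassoc N) (mcomm N) (massoc N) (jmabs N) (N.n1)

instance (N : NelsonAlgebra A) : DistribLattice (NL N) :=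
  DistribLattice.ofInfSupLe fun a b c => le_of_eq (mdist N a b c)

end NelsonAlgebra

/-- The order-theoretic core of a Nelson algebra. -/
structure NelsonCore (L : Type*) [DistribLattice L] where
  im : L → L → L
  ng : L → L
  e : L
  hn3 : ∀ x, ng (ng x) = x
  hn4 : ∀ x y, ng (x ⊓ y) = ng x ⊔ ng y
  hn5 : ∀ x y, x ⊓ ng x ≤ y ⊔ ng y
  hn6 : ∀ x, im x x = e
  htop : ∀ x, x ≤ e
  hn7 : ∀ x y, x ⊓ im x y = x ⊓ (ng x ⊔ y)
  hn8 : ∀ x y z, im (x ⊓ y) z = im x (im y z)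

namespace NelsonCore

variable {L : Type*} [DistribLattice L] (C : NelsonCore L)

theorem njoin' (x y : L) : C.ng (x ⊔ y) = C.ng x ⊓ C.ng y := by
  have h := C.hn4 (C.ng x) (C.ng y)
  rw [C.hn3, C.hn3] at h
  rw [← h, C.hn3]

theorem ML {x c : L} (h : x ≤ C.ng x ⊔ c) : C.im x c = C.e := by
  have h1 : C.im x c ⊓ x = C.im x c ⊓ x := rfl
  have h2 : x ⊓ C.im x c = x := by rw [C.hn7]; exact inf_eq_left.2 h
  calc C.im x c = C.im (C.im x c ⊓ x) c := by rw [inf_comm, h2]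
    _ = C.im (C.im x c) (C.im x c) := by rw [C.hn8]
    _ = C.e := C.hn6 _

theorem K6 (x y : L) : x ⊓ C.ng x ≤ C.im x y := by
  have h : x ⊓ C.ng x ⊓ C.im x y = x ⊓ C.ng x := by
    calc x ⊓ C.ng x ⊓ C.im x y = C.ng x ⊓ (x ⊓ C.im x y) := by
          rw [inf_comm x (C.ng x), inf_assoc]
      _ = C.ng x ⊓ (x ⊓ (C.ng x ⊔ y)) := by rw [C.hn7]
      _ = (C.ng x ⊓ x) ⊓ (C.ng x ⊔ y) := by rw [inf_assoc]
      _ = C.ng x ⊓ x := inf_eq_left.2 (inf_le_left.trans le_sup_left)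
      _ = x ⊓ C.ng x := inf_comm _ _
  exact inf_eq_left.1 h

theorem F7a (x y : L) : x ⊓ y ≤ C.im x y := by
  have h : x ⊓ y ≤ x ⊓ C.im x y := by
    rw [C.hn7]; exact inf_le_inf_left x le_sup_right
  exact h.trans inf_le_right

theorem ONE {u c : L} (h1 : C.im u c = C.e) (h2 : u ⊓ C.ng u ≤ c) : u ≤ c := by
  have h3 : u ⊓ C.im u c = u := by rw [h1]; exact inf_eq_left.2 (C.htop u)
  rw [C.hn7] at h3
  calc u = u ⊓ (C.ng u ⊔ c) := h3.symm
    _ = (u ⊓ C.ng u) ⊔ (u ⊓ c) := inf_sup_left _ _ _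
    _ ≤ c := sup_le h2 inf_le_right

theorem P2' (x y : L) : C.im (x ⊓ C.ng x) y = C.e := by
  apply C.ML
  rw [C.hn4, C.hn3]
  exact inf_le_left.trans (le_sup_right.trans le_sup_left)

theorem E8 (x y : L) : C.ng x ≤ C.im x y := by
  apply C.ONE
  · rw [← C.hn8, inf_comm (C.ng x) x]
    exact C.P2' x y
  · rw [C.hn3, inf_comm]
    exact C.K6 x y

theorem ksplit (u c : L) : u ⊓ C.ng u = (u ⊓ C.ng u ⊓ c) ⊔ (u ⊓ C.ng u ⊓ C.ng c) := by
  conv_lhs => rw [← inf_eq_left.2 (C.hn5 u c)]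
  rw [inf_sup_left]

theorem F7 (x y : L) : y ≤ C.im x y := by
  apply C.ONE
  · rw [← C.hn8]
    exact C.ML (inf_le_left.trans le_sup_right)
  · rw [C.ksplit y x]
    apply sup_le
    · have h : y ⊓ C.ng y ⊓ x ≤ x ⊓ y :=
        le_inf inf_le_right (inf_le_of_left_le inf_le_left)
      exact h.trans (C.F7a x y)
    · exact inf_le_right.trans (C.E8 x y)

theorem RESp {x u s : L} (h : x ⊓ u ≤ (x ⊓ C.ng x) ⊔ s) : u ≤ C.im x s := by
  apply C.ONE
  · rw [← C.hn8]
    apply C.ML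
    rw [C.hn4]
    have h' : u ⊓ x ≤ (x ⊓ C.ng x) ⊔ s := by rw [inf_comm]; exact h
    exact h'.trans (sup_le_sup_right (inf_le_right.trans le_sup_right) s)
  · rw [C.ksplit u x]
    apply sup_le
    · have h1 : u ⊓ C.ng u ⊓ x ≤ x ⊓ u :=
        le_inf inf_le_right (inf_le_of_left_le inf_le_left)
      exact h1.trans (h.trans (sup_le (C.K6 x s) (C.F7 x s)))
    · exact inf_le_right.trans (C.E8 x s)

theorem MONO (x : L) {u v : L} (h : u ≤ v) : C.im x u ≤ C.im x v := by
  apply C.RESp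
  rw [C.hn7, inf_sup_left]
  exact sup_le le_sup_left ((inf_le_right.trans h).trans le_sup_right)

theorem JB (x y z : L) :
    x ⊓ C.ng x ⊓ C.im y z ≤ ((x ⊔ y) ⊓ C.ng (x ⊔ y)) ⊔ z := by
  have hga : x ⊓ C.ng x ⊓ C.ng y ≤ (x ⊔ y) ⊓ C.ng (x ⊔ y) := by
    rw [C.njoin']
    exact le_inf (inf_le_of_left_le (inf_le_left.trans le_sup_left))
      (le_inf (inf_le_of_left_le inf_le_right) inf_le_right)
  have s1 : x ⊓ C.ng x ⊓ C.im y z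
      = (x ⊓ C.ng x ⊓ z ⊓ C.im y z) ⊔ (x ⊓ C.ng x ⊓ C.ng z ⊓ C.im y z) := by
    conv_lhs => rw [C.ksplit x z]
    rw [inf_sup_right]
  rw [s1]
  apply sup_le
  · exact (inf_le_of_left_le inf_le_right).trans le_sup_right
  · -- T := x ⊓ ng x ⊓ ng z ⊓ im y z
    have s2 : x ⊓ C.ng x ⊓ C.ng z ⊓ C.im y z
        = (x ⊓ C.ng x ⊓ y ⊓ (C.ng z ⊓ C.im y z))
          ⊔ (x ⊓ C.ng x ⊓ C.ng y ⊓ (C.ng z ⊓ C.im y z)) := by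
      conv_lhs => rw [inf_assoc (x ⊓ C.ng x) (C.ng z) (C.im y z), C.ksplit x y]
      rw [inf_sup_right]
    rw [s2]
    apply sup_le
    · -- x ⊓ ng x ⊓ y ⊓ (ng z ⊓ im y z) ≤ goal
      have h1 : x ⊓ C.ng x ⊓ y ⊓ (C.ng z ⊓ C.im y z)
          ≤ (y ⊓ C.im y z) ⊓ (x ⊓ C.ng x) := by
        apply le_inf
        · exact le_inf (inf_le_of_left_le inf_le_right) (inf_le_of_right_le inf_le_right)
        · exact inf_le_of_left_le inf_le_left
      have h2 : (y ⊓ C.im y z) ⊓ (x ⊓ C.ng x)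
          ≤ ((y ⊓ C.ng y) ⊔ (y ⊓ z)) ⊓ (x ⊓ C.ng x) := by
        rw [C.hn7, inf_sup_left]
      have h3 : ((y ⊓ C.ng y) ⊔ (y ⊓ z)) ⊓ (x ⊓ C.ng x)
          ≤ ((x ⊔ y) ⊓ C.ng (x ⊔ y)) ⊔ z := by
        rw [inf_sup_right]
        apply sup_le
        · refine le_sup_left.trans' ?_
          refine (le_inf ?_ ?_).trans hga
          · exact inf_le_right
          · exact inf_le_of_left_le inf_le_right
        · exact (inf_le_of_left_le inf_le_right).trans le_sup_right
      exact (h1.trans (h2.trans h3))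
    · exact (inf_le_of_left_le hga).trans le_sup_left

theorem D1 (x y z : L) : C.im x (y ⊓ z) = C.im x y ⊓ C.im x z := by
  apply le_antisymm
  · exact le_inf (C.MONO x inf_le_left) (C.MONO x inf_le_right)
  · apply C.RESp
    have h : x ⊓ (C.im x y ⊓ C.im x z) = (x ⊓ C.im x y) ⊓ (x ⊓ C.im x z) := by
      rw [inf_inf_distrib_left]
    rw [h, C.hn7, C.hn7, ← inf_inf_distrib_left, ← sup_inf_left, inf_sup_left]
    exact sup_le_sup_left inf_le_right _

theorem D2half (x y z : L) : C.im (x ⊔ y) z ≤ C.im x z := by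
  apply C.RESp
  have e1 : x ⊓ C.im (x ⊔ y) z = x ⊓ ((x ⊔ y) ⊓ C.im (x ⊔ y) z) := by
    rw [← inf_assoc, inf_eq_left.2 (le_sup_left : x ≤ x ⊔ y)]
  rw [e1, C.hn7, inf_sup_left, inf_sup_left]
  apply sup_le
  · refine le_sup_left.trans' (le_inf inf_le_left ?_)
    refine inf_le_of_right_le (inf_le_right.trans ?_)
    rw [C.njoin']
    exact inf_le_left
  · exact (inf_le_of_right_le inf_le_right).trans le_sup_right

theorem D2 (x y z : L) : C.im (x ⊔ y) z = C.im x z ⊓ C.im y z := by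
  apply le_antisymm
  · refine le_inf (C.D2half x y z) ?_
    rw [sup_comm]
    exact C.D2half y x z
  · apply C.RESp
    rw [inf_sup_right x y (C.im x z ⊓ C.im y z)]
    apply sup_le
    · have h1 : x ⊓ (C.im x z ⊓ C.im y z) = (x ⊓ C.im x z) ⊓ C.im y z := by
        rw [inf_assoc]
      rw [h1, C.hn7, inf_sup_left x (C.ng x) z,
        inf_sup_right (x ⊓ C.ng x) (x ⊓ z) (C.im y z)]
      apply sup_le
      · exact C.JB x y z
      · exact (inf_le_of_left_le inf_le_right).trans le_sup_right
    · have h1 : y ⊓ (C.im x z ⊓ C.im y z) = (y ⊓ C.im y z) ⊓ C.im x z := by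
        rw [inf_comm (C.im x z) (C.im y z), inf_assoc]
      rw [h1, C.hn7, inf_sup_left y (C.ng y) z,
        inf_sup_right (y ⊓ C.ng y) (y ⊓ z) (C.im x z)]
      apply sup_le
      · have := C.JB y x z
        rwa [sup_comm y x] at this
      · exact (inf_le_of_left_le inf_le_right).trans le_sup_right

end NelsonCore

namespace NelsonAlgebra

/-- The order-theoretic core attached to a Nelson algebra. -/
def core {A : Type*} (N : NelsonAlgebra A) : NelsonCore (NL N) where
  im := N.imp
  ng := N.neg
  e := N.one
  hn3 := N.n3
  hn4 := N.n4
  hn5 := fun x y => inf_eq_left.1 (N.n5 x y).symm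
  hn6 := N.n6
  htop := fun x => sup_eq_right.1 (jtop N x)
  hn7 := N.n7
  hn8 := N.n8

end NelsonAlgebra

theorem nelson_wimp_meet_distrib {A : Type*} (N : NelsonAlgebra A) (x y z : A) :
    N.wimp x (N.meet y z) = N.meet (N.wimp x y) (N.wimp x z) := by
  show ((NelsonAlgebra.core N).im x (y ⊓ z)
      ⊓ (NelsonAlgebra.core N).im ((NelsonAlgebra.core N).ng (y ⊓ z))
        ((NelsonAlgebra.core N).ng x) : NelsonAlgebra.NL N)
    = ((NelsonAlgebra.core N).im x y
        ⊓ (NelsonAlgebra.core N).im ((NelsonAlgebra.core N).ng y) ((NelsonAlgebra.core N).ng x))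
      ⊓ ((NelsonAlgebra.core N).im x z
        ⊓ (NelsonAlgebra.core N).im ((NelsonAlgebra.core N).ng z) ((NelsonAlgebra.core N).ng x))
  have h1 := (NelsonAlgebra.core N).D1 x y z
  have h2 := (NelsonAlgebra.core N).hn4 y z
  have h3 := (NelsonAlgebra.core N).D2 ((NelsonAlgebra.core N).ng y) ((NelsonAlgebra.core N).ng z)
    ((NelsonAlgebra.core N).ng x)
  exact (congrArg₂ (fun a b : NelsonAlgebra.NL N => a ⊓ b) h1
    ((congrArg (fun t => (NelsonAlgebra.core N).im t ((NelsonAlgebra.core N).ng x)) h2).trans h3)).trans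
    (inf_inf_inf_comm _ _ _ _)
end

section
/- Let ⟨A,∧,↣,0⟩ be a Brignole algebra. Define x∨y:=((x↣0)∧(y↣0))↣0, x→y:=x↣(x↣y), ∼x:=x↣0 and 1:=0↣0. Then ⟨A,∧,∨,→,∼,1⟩ is a Nelson algebra, i.e., it satisfies the eight identities (N1)–(N8): (N1) x∧(x∨y)=x; (N2) x∧(y∨z)=(z∧x)∨(y∧x); (N3) ∼∼x=x; (N4) ∼(x∧y)=∼x∨∼y; (N5) x∧∼x=(x∧∼x)∧(y∨∼y); (N6) x→x=1; (N7) x∧(x→y)=x∧(∼x∨y); (N8) (x∧y)→z=x→(y→z). -/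
/-- A Brignole algebra ⟨A,∧,↣,0⟩ of type (2,2,0), with the abbreviations
∼x := x↣0 and x∨y := ((x↣0)∧(y↣0))↣0 written out in the axioms. -/
structure BrignoleAlgebra (A : Type*) where
  meet : A → A → A
  himp : A → A → A
  zero : A
  b1 : ∀ x y, himp (himp x x) y = y
  b2 : ∀ x y, meet (himp x y) y = y
  b3 : ∀ x y, meet x (himp (meet x (himp y zero)) zero) = meet x (himp x y)
  b4 : ∀ x y z, himp x (meet y z) = meet (himp x y) (himp x z)
  b5 : ∀ x y, himp x y = himp (himp y zero) (himp x zero)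
  b6 : ∀ x y z, himp x (himp x (himp y (himp y z))) =
    himp (meet x y) (himp (meet x y) z)
  b7 : ∀ x y, himp (himp (meet (himp x zero) y) zero) (himp x y) = himp x y
  b8 : ∀ x y, meet x (himp (meet (himp x zero) (himp y zero)) zero) = x
  b9 : ∀ x y z, meet x (himp (meet (himp y zero) (himp z zero)) zero) =
    himp (meet (himp (meet z x) zero) (himp (meet y x) zero)) zero
  b10 : ∀ x y, meet (meet x (himp x zero))
      (himp (meet (himp y zero) (himp (himp y zero) zero)) zero) =
    meet x (himp x zero)

/-- The negation ∼x := x↣0. -/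
def BrignoleAlgebra.neg {A : Type*} (B : BrignoleAlgebra A) (x : A) : A :=
  B.himp x B.zero

/-- The join x∨y := ((x↣0)∧(y↣0))↣0. -/
def BrignoleAlgebra.join {A : Type*} (B : BrignoleAlgebra A) (x y : A) : A :=
  B.himp (B.meet (B.himp x B.zero) (B.himp y B.zero)) B.zero

/-- The strong implication x→y := x↣(x↣y). -/
def BrignoleAlgebra.imp {A : Type*} (B : BrignoleAlgebra A) (x y : A) : A :=
  B.himp x (B.himp x y)

/-- The unit 1 := 0↣0. -/
def BrignoleAlgebra.one {A : Type*} (B : BrignoleAlgebra A) : A :=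
  B.himp B.zero B.zero

namespace BrignoleAlgebra

variable {A : Type*} (B : BrignoleAlgebra A)

lemma one_himp (y : A) : B.himp B.one y = y := B.b1 B.zero y

lemma aux1 (b : A) : b = B.himp (B.neg b) (B.neg B.one) := by
  have h := B.b5 (B.himp B.zero B.zero) b
  rw [B.b1 B.zero b] at h
  exact h

lemma neg_one : B.neg B.one = B.zero := by
  have h := B.aux1 B.zero
  have h2 : B.himp (B.neg B.zero) (B.neg B.one) = B.neg B.one := B.b1 B.zero _
  rw [h2] at h
  exact h.symm

lemma neg_neg (x : A) : B.neg (B.neg x) = x := by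
  have h := B.aux1 x
  rw [B.neg_one] at h
  exact h.symm

lemma meet_idem (x : A) : B.meet x x = x := by
  have h := B.b2 (B.himp x x) x
  rwa [B.b1 x x] at h

lemma meet_zero (z : A) : B.meet z B.zero = B.zero := by
  have h := B.b2 (B.neg z) B.zero
  show B.meet z B.zero = B.zero
  calc B.meet z B.zero = B.meet (B.neg (B.neg z)) B.zero := by rw [B.neg_neg]
    _ = B.zero := h

lemma join_self (a : A) : B.join a a = a := by
  show B.himp (B.meet (B.himp a B.zero) (B.himp a B.zero)) B.zero = a
  rw [B.meet_idem]
  exact B.neg_neg a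

lemma meet_comm (x y : A) : B.meet x y = B.meet y x := by
  have h := B.b9 x y y
  have h1 : B.himp (B.meet (B.himp y B.zero) (B.himp y B.zero)) B.zero = y := B.join_self y
  rw [h1] at h
  have h2 : B.himp (B.meet (B.himp (B.meet y x) B.zero) (B.himp (B.meet y x) B.zero)) B.zero = B.meet y x := B.join_self (B.meet y x)
  rw [h2] at h
  exact h

lemma meet_one (x : A) : B.meet x B.one = x := by
  have h := B.b8 x B.one
  have h0 : B.himp B.one B.zero = B.zero := B.neg_one
  rw [h0, B.meet_zero] at h
  -- now h : B.meet x (B.himp B.zero B.zero) = x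
  exact h

lemma himp_one (x : A) : B.himp x B.one = B.one := by
  have h := B.b2 x B.one
  rw [B.meet_one] at h
  exact h

lemma himp_self (x : A) : B.himp x x = B.one := by
  have h : B.neg (B.himp x x) = B.zero := B.b1 x B.zero
  have := B.neg_neg (B.himp x x)
  rw [h] at this
  exact this.symm

lemma neg_meet (x y : A) : B.neg (B.meet x y) = B.join (B.neg x) (B.neg y) := by
  show B.himp (B.meet x y) B.zero =
    B.himp (B.meet (B.himp (B.neg x) B.zero) (B.himp (B.neg y) B.zero)) B.zero
  rw [show B.himp (B.neg x) B.zero = x from B.neg_neg x,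
      show B.himp (B.neg y) B.zero = y from B.neg_neg y]

lemma join_comm (x y : A) : B.join x y = B.join y x := by
  show B.himp (B.meet (B.himp x B.zero) (B.himp y B.zero)) B.zero =
    B.himp (B.meet (B.himp y B.zero) (B.himp x B.zero)) B.zero
  rw [B.meet_comm]

lemma absorb (x y : A) : B.meet x (B.join x y) = x := B.b8 x y

lemma absorb2 (x y : A) : B.meet x (B.join y x) = x := by
  rw [B.join_comm]; exact B.b8 x y

lemma neg_join (x y : A) : B.neg (B.join x y) = B.meet (B.neg x) (B.neg y) := by
  show B.neg (B.neg (B.meet (B.neg x) (B.neg y))) = _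
  exact B.neg_neg _

-- b3 restated: x∧(x↣y) = x∧(∼x∨y)
lemma b3' (x y : A) : B.meet x (B.himp x y) = B.meet x (B.join (B.neg x) y) := by
  have h := B.b3 x y
  have : B.join (B.neg x) y = B.himp (B.meet x (B.himp y B.zero)) B.zero := by
    show B.himp (B.meet (B.himp (B.neg x) B.zero) (B.himp y B.zero)) B.zero = _
    rw [show B.himp (B.neg x) B.zero = x from B.neg_neg x]
  rw [this]
  exact h.symm

-- if b ≤ c (i.e. b∧c = b) then c∨b = c
lemma b9' (x y z : A) : B.meet x (B.join y z) = B.join (B.meet z x) (B.meet y x) :=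
  B.b9 x y z

lemma join_absorb {b c : A} (h : B.meet b c = b) : B.join c b = c := by
  have hn : B.neg b = B.join (B.neg b) (B.neg c) := by
    conv_lhs => rw [← h, B.neg_meet]
  have h2 : B.meet (B.neg c) (B.neg b) = B.neg c := by
    rw [hn]; exact B.absorb2 (B.neg c) (B.neg b)
  show B.himp (B.meet (B.himp c B.zero) (B.himp b B.zero)) B.zero = c
  have : B.meet (B.himp c B.zero) (B.himp b B.zero) = B.himp c B.zero := h2
  rw [this]
  exact B.neg_neg c

end BrignoleAlgebra

theorem brignole_to_nelson_tmp {A : Type*} (B : BrignoleAlgebra A) :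
    (∀ x y, B.meet x (B.join x y) = x) ∧
    (∀ x y z, B.meet x (B.join y z) = B.join (B.meet z x) (B.meet y x)) ∧
    (∀ x, B.neg (B.neg x) = x) ∧
    (∀ x y, B.neg (B.meet x y) = B.join (B.neg x) (B.neg y)) ∧
    (∀ x y, B.meet x (B.neg x) =
      B.meet (B.meet x (B.neg x)) (B.join y (B.neg y))) ∧
    (∀ x, B.imp x x = B.one) ∧
    (∀ x y, B.meet x (B.imp x y) = B.meet x (B.join (B.neg x) y)) ∧
    (∀ x y z, B.imp (B.meet x y) z = B.imp x (B.imp y z)) := by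
  refine ⟨B.b8, fun x y z => B.b9 x y z, B.neg_neg, B.neg_meet, fun x y => (B.b10 x y).symm, ?_, ?_, fun x y z => (B.b6 x y z).symm⟩
  · intro x
    show B.himp x (B.himp x x) = B.one
    rw [B.himp_self, B.himp_one]
  · intro x y
    show B.meet x (B.himp x (B.himp x y)) = B.meet x (B.join (B.neg x) y)
    calc B.meet x (B.himp x (B.himp x y))
        = B.meet x (B.join (B.neg x) (B.himp x y)) := B.b3' x (B.himp x y)
      _ = B.join (B.meet (B.himp x y) x) (B.meet (B.neg x) x) := B.b9 x (B.neg x) (B.himp x y)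
      _ = B.join (B.meet x (B.himp x y)) (B.meet (B.neg x) x) := by rw [B.meet_comm (B.himp x y) x]
      _ = B.join (B.meet x (B.join (B.neg x) y)) (B.meet (B.neg x) x) := by rw [B.b3' x y]
      _ = B.join (B.join (B.meet y x) (B.meet (B.neg x) x)) (B.meet (B.neg x) x) := by rw [B.b9' x (B.neg x) y]
      _ = B.join (B.meet y x) (B.meet (B.neg x) x) := B.join_absorb (B.absorb2 (B.meet (B.neg x) x) (B.meet y x))
      _ = B.meet x (B.join (B.neg x) y) := (B.b9 x (B.neg x) y).symm

/-- A Brignole algebra, with x∨y := ((x↣0)∧(y↣0))↣0, x→y := x↣(x↣y), ∼x := x↣0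
and 1 := 0↣0, is a Nelson algebra: the identities (N1)–(N8) hold. -/
theorem brignole_to_nelson {A : Type*} (B : BrignoleAlgebra A) :
    (∀ x y, B.meet x (B.join x y) = x) ∧
    (∀ x y z, B.meet x (B.join y z) = B.join (B.meet z x) (B.meet y x)) ∧
    (∀ x, B.neg (B.neg x) = x) ∧
    (∀ x y, B.neg (B.meet x y) = B.join (B.neg x) (B.neg y)) ∧
    (∀ x y, B.meet x (B.neg x) =
      B.meet (B.meet x (B.neg x)) (B.join y (B.neg y))) ∧
    (∀ x, B.imp x x = B.one) ∧
    (∀ x y, B.meet x (B.imp x y) = B.meet x (B.join (B.neg x) y)) ∧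
    (∀ x y z, B.imp (B.meet x y) z = B.imp x (B.imp y z)) := brignole_to_nelson_tmp B
end

section
/- Let ⟨A,∧,↣,0⟩ be a Brignole algebra and define x→y:=x↣(x↣y) and ∼x:=x↣0. Then for all x,y in A the original implication is recovered: (x→y)∧(∼y→∼x) = x↣y. -/
namespace BrignoleAlgebra
variable {A : Type*} (B : BrignoleAlgebra A)

lemma neg_neg_s15 (y : A) : B.himp (B.himp y B.zero) B.zero = y := by
  have h2 := B.b5 (B.himp y y) y
  rw [B.b1 y B.zero] at h2
  rw [B.b1 y y] at h2
  exact h2.symm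

lemma swap (x y : A) :
    B.himp (B.himp x B.zero) y = B.himp (B.himp y B.zero) x := by
  have h := B.b5 (B.himp x B.zero) y
  rw [B.neg_neg_s15 x] at h
  exact h

lemma key (x y : A) :
    B.meet (B.himp x (B.himp x y))
      (B.himp (B.himp y B.zero) (B.himp x y)) = B.himp x y := by
  have h := B.b7 x y
  rw [B.swap (B.meet (B.himp x B.zero) y) (B.himp x y)] at h
  rw [B.b4 (B.himp (B.himp x y) B.zero) (B.himp x B.zero) y] at h
  rw [B.swap (B.himp x y) (B.himp x B.zero)] at h
  rw [B.neg_neg_s15 x] at h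
  rw [B.swap (B.himp x y) y] at h
  exact h

end BrignoleAlgebra

theorem brignole_recover_himp {A : Type*} (B : BrignoleAlgebra A) (x y : A) :
    B.meet (B.imp x y) (B.imp (B.neg y) (B.neg x)) = B.himp x y := by
  unfold BrignoleAlgebra.imp BrignoleAlgebra.neg
  rw [← B.b5 x y]
  exact B.key x y
end
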